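/- For every b ∈ ℝ and all real numbers u, t with 0 < u < t, the following integral identity holds: (e^{−b²u/2}/√(2πu)) · ∫_ℝ e^{−by − b²(t−u)/2} · (|y|/√(2π(t−u)³)) · e^{−y²/(2(t−u))} dy = ψ_t(u), where ψ_t(u) = (e^{−b²u/2}/(π√(u(t−u)))) · [ e^{−b²(t−u)/2} + (b/2)·√(2π(t−u)) · (2Φ(b√(t−u)) − 1) ]. (This is the closed-form evaluation, in Lemma 1, of Salminen's formula for the density of the last passage time of Brownian motion before time t through the linear boundary a + bt; note that the result does not depend on a.) -/

import Mathlib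

open Real MeasureTheory Set Filter

/-- Standard Gaussian density φ(z) = (1/√(2π)) e^{−z²/2}. -/
noncomputable def gaussPdf (z : ℝ) : ℝ := (1 / Real.sqrt (2 * π)) * Real.exp (-z ^ 2 / 2)

/-- Standard Gaussian distribution function Φ(y) = ∫_{−∞}^y φ(z) dz. -/
noncomputable def gaussCdf (y : ℝ) : ℝ := ∫ z in Set.Iio y, gaussPdf z

/-- ψ_t(u) = (e^{−b²u/2}/(π√(u(t−u)))) · [ e^{−b²(t−u)/2}
      + (b/2)·√(2π(t−u)) · (2Φ(b√(t−u)) − 1) ]. -/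
noncomputable def psi (b t u : ℝ) : ℝ :=
  (Real.exp (-b ^ 2 * u / 2) / (π * Real.sqrt (u * (t - u)))) *
    (Real.exp (-b ^ 2 * (t - u) / 2) +
      (b / 2) * Real.sqrt (2 * π * (t - u)) *
        (2 * gaussCdf (b * Real.sqrt (t - u)) - 1))

/-- Inverse Gaussian first-passage density f_{τ₁}(t) = (|a−x|/t^{3/2}) φ((a+bt−x)/√t). -/
noncomputable def invGaussPdf (a x b t : ℝ) : ℝ :=
  (|a - x| / t ^ ((3 : ℝ) / 2)) * gaussPdf ((a + b * t - x) / Real.sqrt t)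


lemma exp_form (s z : ℝ) : Real.exp (-z ^ 2 / (2 * s)) = Real.exp (-(1 / (2 * s)) * z ^ 2) := by
  congr 1; ring

lemma integrable_g {s : ℝ} (hs : 0 < s) :
    Integrable (fun z : ℝ => Real.exp (-z ^ 2 / (2 * s))) := by
  simp_rw [exp_form]
  exact integrable_exp_neg_mul_sq (by positivity)

lemma integrable_zg {s : ℝ} (hs : 0 < s) :
    Integrable (fun z : ℝ => z * Real.exp (-z ^ 2 / (2 * s))) := by
  simp_rw [exp_form]
  exact integrable_mul_exp_neg_mul_sq (by positivity)

lemma integrable_std : Integrable (fun z : ℝ => Real.exp (-z ^ 2 / 2)) := by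
  have := integrable_g (one_pos)
  simpa using this

lemma int_std_Iic (c : ℝ) :
    ∫ x in Iic c, Real.exp (-x ^ 2 / 2) = Real.sqrt (2 * π) * gaussCdf c := by
  rw [gaussCdf, setIntegral_congr_set Iio_ae_eq_Iic]
  unfold gaussPdf
  rw [integral_const_mul, ← mul_assoc, mul_one_div,
    div_self (Real.sqrt_ne_zero'.mpr (by positivity)), one_mul]

lemma int_std_Ioi (c : ℝ) :
    ∫ x in Ioi c, Real.exp (-x ^ 2 / 2) = Real.sqrt (2 * π) * gaussCdf (-c) := by
  have h := integral_comp_neg_Ioi c (fun x => Real.exp (-x ^ 2 / 2))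
  simp only [neg_sq] at h
  rw [h, int_std_Iic]

lemma int_std_total : ∫ x : ℝ, Real.exp (-x ^ 2 / 2) = Real.sqrt (2 * π) := by
  have h : ∫ x : ℝ, Real.exp (-x ^ 2 / 2) = Real.sqrt (π / (1/2)) := by
    rw [← integral_gaussian (1/2 : ℝ)]
    congr 1; funext x; congr 1; ring
  rw [h, show π / (1 / 2 : ℝ) = 2 * π by ring]

lemma gaussCdf_neg (c : ℝ) : gaussCdf (-c) = 1 - gaussCdf c := by
  have h := intervalIntegral.integral_Iic_add_Ioi (b := c)
    integrable_std.integrableOn integrable_std.integrableOn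
  rw [int_std_total, int_std_Ioi, int_std_Iic] at h
  have hpos : (0:ℝ) < Real.sqrt (2 * π) := by positivity
  have h2 : Real.sqrt (2 * π) * (gaussCdf c + gaussCdf (-c)) = Real.sqrt (2 * π) * 1 := by
    ring_nf; ring_nf at h; linarith
  have := mul_left_cancel₀ hpos.ne' h2
  linarith

lemma int_g_Ioi {s : ℝ} (hs : 0 < s) (a : ℝ) :
    ∫ z in Ioi a, Real.exp (-z ^ 2 / (2 * s))
      = Real.sqrt (2 * π * s) * gaussCdf (-(a / Real.sqrt s)) := by
  have hsq : 0 < Real.sqrt s := Real.sqrt_pos.mpr hs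
  have h := integral_comp_mul_left_Ioi (fun z => Real.exp (-z ^ 2 / (2 * s)))
    (a / Real.sqrt s) hsq
  rw [show Real.sqrt s * (a / Real.sqrt s) = a by field_simp] at h
  simp only [smul_eq_mul] at h
  rw [show (fun x : ℝ => Real.exp (-(Real.sqrt s * x) ^ 2 / (2 * s)))
      = fun x : ℝ => Real.exp (-x ^ 2 / 2) by
    funext x; congr 1; rw [mul_pow, Real.sq_sqrt hs.le]; field_simp] at h
  rw [int_std_Ioi] at h
  have h2 : ∫ z in Ioi a, Real.exp (-z ^ 2 / (2 * s))
      = Real.sqrt s * (Real.sqrt (2 * π) * gaussCdf (-(a / Real.sqrt s))) := by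
    rw [h]; field_simp
  rw [h2, Real.sqrt_mul (by positivity : (0:ℝ) ≤ 2 * π) s]
  ring

lemma int_zg_Ioi {s : ℝ} (hs : 0 < s) (a : ℝ) :
    ∫ z in Ioi a, z * Real.exp (-z ^ 2 / (2 * s)) = s * Real.exp (-a ^ 2 / (2 * s)) := by
  have hderiv : ∀ x ∈ Ici a, HasDerivAt (fun z : ℝ => -s * Real.exp (-z ^ 2 / (2 * s)))
      (x * Real.exp (-x ^ 2 / (2 * s))) x := by
    intro x _
    have h0 := ((hasDerivAt_pow 2 x).neg).div_const (2 * s)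
    norm_num at h0
    have h1 : HasDerivAt (fun z : ℝ => -z ^ 2 / (2 * s)) (-x / s) x := by
      refine h0.congr_deriv ?_
      field_simp
    have h2 := (h1.exp).const_mul (-s)
    refine h2.congr_deriv ?_
    field_simp
  have htop : Tendsto (fun z : ℝ => -s * Real.exp (-z ^ 2 / (2 * s))) atTop (nhds 0) := by
    have h1 : Tendsto (fun z : ℝ => -(1 / (2 * s)) * z ^ 2) atTop atBot :=
      (tendsto_pow_atTop two_ne_zero).const_mul_atTop_of_neg
        (neg_lt_zero.mpr (by positivity))
    have h2 := Real.tendsto_exp_atBot.comp h1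
    have h3 := h2.const_mul (-s)
    simp only [Function.comp, mul_zero] at h3
    simp_rw [exp_form]
    exact h3
  have h := integral_Ioi_of_hasDerivAt_of_tendsto' hderiv
    ((integrable_zg hs).integrableOn) htop
  rw [h]; ring

theorem stmt0 (b u t : ℝ) (hu : 0 < u) (hut : u < t) :
    (Real.exp (-b ^ 2 * u / 2) / Real.sqrt (2 * π * u)) *
      (∫ y : ℝ, Real.exp (-b * y - b ^ 2 * (t - u) / 2) *
        (|y| / Real.sqrt (2 * π * (t - u) ^ 3)) * Real.exp (-y ^ 2 / (2 * (t - u))))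
      = psi b t u := by
  have hs : 0 < t - u := sub_pos.mpr hut
  unfold psi
  set s := t - u with hsdef
  set m := b * s with hmdef
  have hsq : 0 < Real.sqrt s := Real.sqrt_pos.mpr hs
  have hg := integrable_g hs
  have hzg := integrable_zg hs
  -- Step 1: rewrite integrand
  have hinteg : (fun y : ℝ => Real.exp (-b * y - b ^ 2 * s / 2) *
      (|y| / Real.sqrt (2 * π * s ^ 3)) * Real.exp (-y ^ 2 / (2 * s)))
      = fun y : ℝ => (Real.sqrt (2 * π * s ^ 3))⁻¹ *
        (|y + m - m| * Real.exp (-(y + m) ^ 2 / (2 * s))) := by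
    funext y
    have he : Real.exp (-b * y - b ^ 2 * s / 2) * Real.exp (-y ^ 2 / (2 * s))
        = Real.exp (-(y + m) ^ 2 / (2 * s)) := by
      rw [← Real.exp_add]; congr 1; rw [hmdef]; field_simp; ring
    rw [show |y + m - m| = |y| by congr 1; ring, ← he]
    ring
  rw [hinteg, integral_const_mul]
  have hshift : (∫ y : ℝ, |y + m - m| * Real.exp (-(y + m) ^ 2 / (2 * s)))
      = ∫ z : ℝ, |z - m| * Real.exp (-z ^ 2 / (2 * s)) :=
    integral_add_right_eq_self (fun z => |z - m| * Real.exp (-z ^ 2 / (2 * s))) m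
  rw [hshift]
  -- Integrability of F
  have hF : Integrable (fun z : ℝ => |z - m| * Real.exp (-z ^ 2 / (2 * s))) := by
    refine (hzg.abs.add (hg.const_mul |m|)).mono' ?_ ?_
    · exact ((continuous_abs.comp (continuous_id.sub continuous_const)).mul
        (Real.continuous_exp.comp (by fun_prop))).aestronglyMeasurable
    · filter_upwards with z
      have he : 0 < Real.exp (-z ^ 2 / (2 * s)) := Real.exp_pos _
      rw [Real.norm_eq_abs, abs_mul, abs_abs, abs_of_pos he]
      calc |z - m| * Real.exp (-z ^ 2 / (2 * s))
          ≤ (|z| + |m|) * Real.exp (-z ^ 2 / (2 * s)) :=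
            mul_le_mul_of_nonneg_right (abs_sub z m) he.le
        _ = |z * Real.exp (-z ^ 2 / (2 * s))| + |m| * Real.exp (-z ^ 2 / (2 * s)) := by
            rw [abs_mul z (Real.exp (-z ^ 2 / (2 * s))), abs_of_pos he]; ring
  -- Split at m
  have hJsplit := intervalIntegral.integral_Iic_add_Ioi (b := m)
    hF.integrableOn hF.integrableOn
  have hIoi : ∫ z in Ioi m, |z - m| * Real.exp (-z ^ 2 / (2 * s))
      = s * Real.exp (-m ^ 2 / (2 * s))
        - m * (Real.sqrt (2 * π * s) * gaussCdf (-(m / Real.sqrt s))) := by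
    have h1 : ∫ z in Ioi m, |z - m| * Real.exp (-z ^ 2 / (2 * s))
        = ∫ z in Ioi m, (z * Real.exp (-z ^ 2 / (2 * s))
            - m * Real.exp (-z ^ 2 / (2 * s))) := by
      refine setIntegral_congr_fun measurableSet_Ioi fun z hz => ?_
      rw [abs_of_pos (sub_pos.mpr hz)]; ring
    rw [h1, integral_sub hzg.integrableOn ((hg.const_mul m).integrableOn),
      int_zg_Ioi hs, integral_const_mul, int_g_Ioi hs]
  have hIic : ∫ z in Iic m, |z - m| * Real.exp (-z ^ 2 / (2 * s))
      = s * Real.exp (-m ^ 2 / (2 * s))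
        + m * (Real.sqrt (2 * π * s) * gaussCdf (m / Real.sqrt s)) := by
    have h0 := integral_comp_neg_Ioi (-m) (fun z => |z - m| * Real.exp (-z ^ 2 / (2 * s)))
    rw [neg_neg] at h0
    rw [← h0]
    have h1 : ∫ x in Ioi (-m), |(-x) - m| * Real.exp (-(-x) ^ 2 / (2 * s))
        = ∫ x in Ioi (-m), (x * Real.exp (-x ^ 2 / (2 * s))
            + m * Real.exp (-x ^ 2 / (2 * s))) := by
      refine setIntegral_congr_fun measurableSet_Ioi fun x hx => ?_
      have hx' : -m < x := hx
      rw [neg_sq, show -x - m = -(x + m) by ring, abs_neg,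
        abs_of_pos (by linarith : (0:ℝ) < x + m)]
      ring
    rw [h1, integral_add hzg.integrableOn ((hg.const_mul m).integrableOn),
      int_zg_Ioi hs, integral_const_mul, int_g_Ioi hs,
      show -(-m / Real.sqrt s) = m / Real.sqrt s by ring,
      show (-m : ℝ) ^ 2 = m ^ 2 by ring]
  -- Combine
  rw [← hJsplit, hIoi, hIic, gaussCdf_neg]
  -- simplify m / √s = b * √s
  have hdiv : m / Real.sqrt s = b * Real.sqrt s := by
    rw [hmdef, mul_div_assoc, Real.div_sqrt]
  rw [hdiv]
  -- m^2/(2s) = b^2 s / 2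
  have hexp : Real.exp (-m ^ 2 / (2 * s)) = Real.exp (-b ^ 2 * s / 2) := by
    congr 1; rw [hmdef]; field_simp
  rw [hexp]
  -- final algebra
  have hQ3 : Real.sqrt (2 * π * s ^ 3) = Real.sqrt (2 * π * s) * s := by
    rw [show 2 * π * s ^ 3 = (2 * π * s) * s ^ 2 by ring,
      Real.sqrt_mul (by positivity), Real.sqrt_sq hs.le]
  have hPQ : Real.sqrt (2 * π * u) * Real.sqrt (2 * π * s)
      = 2 * π * Real.sqrt (u * s) := by
    rw [← Real.sqrt_mul (by positivity),
      show 2 * π * u * (2 * π * s) = (2 * π) ^ 2 * (u * s) by ring,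
      Real.sqrt_mul (by positivity), Real.sqrt_sq (by positivity)]
  set P := Real.sqrt (2 * π * u) with hP
  set Q := Real.sqrt (2 * π * s) with hQ
  set R := Real.sqrt (u * s) with hR
  have hPpos : 0 < P := by rw [hP]; positivity
  have hQpos : 0 < Q := by rw [hQ]; positivity
  have hRpos : 0 < R := by rw [hR]; positivity
  rw [hQ3]
  set E := Real.exp (-b ^ 2 * s / 2)
  set Eu := Real.exp (-b ^ 2 * u / 2)
  set G := gaussCdf (b * Real.sqrt s)
  have hπ : 0 < π := Real.pi_pos
  field_simp
  linear_combination (Eu * 2 * π * R * Q * (2 * G - 1)) * hmdef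
    - (Eu * s * (2 * E + b * Q * (2 * G - 1))) * hPQ
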